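/- Let r and p be odd primes with r dividing p+1. Then SL(2,𝔽_p) contains an element of order r, and every element of order r in SL(2,𝔽_p) acts irreducibly on 𝔽_p × 𝔽_p: the only subspaces invariant under such a matrix are {0} and the whole space. -/

import Mathlib

open Matrix

private lemma SL2_card (p : ℕ) [Fact p.Prime] :
    Nat.card (SpecialLinearGroup (Fin 2) (ZMod p)) * (p - 1) = Nat.card (GL (Fin 2) (ZMod p)) := by
  have hsurj : Function.Surjective (GeneralLinearGroup.det : GL (Fin 2) (ZMod p) →* (ZMod p)ˣ) := by
    intro u
    refine ⟨GeneralLinearGroup.mk'' (Matrix.diagonal ![(u : ZMod p), 1]) ?_, ?_⟩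
    · simp [Matrix.det_diagonal, Fin.prod_univ_two]
    · ext
      simp [GeneralLinearGroup.mk'', Matrix.nonsingInvUnit, Matrix.det_diagonal, Fin.prod_univ_two]
  have hker : Nat.card (GeneralLinearGroup.det : GL (Fin 2) (ZMod p) →* (ZMod p)ˣ).ker
      = Nat.card (SpecialLinearGroup (Fin 2) (ZMod p)) := by
    refine Nat.card_congr (Equiv.symm ⟨fun g => ⟨g, ?_⟩, fun A => ⟨A.1.1, ?_⟩, ?_, ?_⟩)
    · exact SpecialLinearGroup.coeToGL_det g
    · have := A.2
      rw [MonoidHom.mem_ker] at this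
      simpa using congrArg Units.val this
    · intro g; rfl
    · intro A; ext : 2; rfl
  calc Nat.card (SpecialLinearGroup (Fin 2) (ZMod p)) * (p - 1)
      = Nat.card (GeneralLinearGroup.det : GL (Fin 2) (ZMod p) →* (ZMod p)ˣ).ker
        * Nat.card ((ZMod p)ˣ) := by
        rw [hker, Nat.card_units]; simp [Nat.card_eq_fintype_card, ZMod.card]
    _ = Nat.card (GL (Fin 2) (ZMod p)) := by
        rw [← Nat.card_congr (QuotientGroup.quotientKerEquivOfSurjective _ hsurj).toEquiv]
        rw [mul_comm]
        exact (Subgroup.card_eq_card_quotient_mul_card_subgroup _).symm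

private lemma SL2_card' (p : ℕ) [Fact p.Prime] :
    Nat.card (SpecialLinearGroup (Fin 2) (ZMod p)) = p * (p - 1) * (p + 1) := by
  have h := SL2_card p
  have hGL : Nat.card (GL (Fin 2) (ZMod p)) = (p ^ 2 - 1) * (p ^ 2 - p) := by
    rw [Matrix.card_GL_field]
    simp [Fin.prod_univ_two, ZMod.card]
  rw [hGL] at h
  obtain ⟨k, hk, rfl⟩ : ∃ k, 1 ≤ k ∧ p = k + 1 :=
    ⟨p - 1, by have := (Fact.out : p.Prime).two_le; omega, by have := (Fact.out : p.Prime).two_le; omega⟩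
  have h1 : (k+1) ^ 2 - 1 = k * (k + 2) := by ring_nf; omega
  have h2 : (k+1) ^ 2 - (k+1) = k * (k + 1) := by ring_nf; omega
  rw [h1, h2] at h
  have h3 : k + 1 - 1 = k := by omega
  rw [h3] at h ⊢
  have h4 : Nat.card (SpecialLinearGroup (Fin 2) (ZMod (k+1))) * k
      = ((k+1) * k * (k+1+1)) * k := by rw [h]; ring
  exact Nat.eq_of_mul_eq_mul_right (by omega) h4

private -- (1+N)^n = 1 + n•N when N^2 = 0
lemma unipotent_pow {R : Type*} [CommRing R] {m : Type*} [Fintype m] [DecidableEq m]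
    (N : Matrix m m R) (hN : N * N = 0) (n : ℕ) :
    (1 + N) ^ n = 1 + (n : R) • N := by
  induction n with
  | zero => simp
  | succ n ih =>
    rw [pow_succ, ih]
    push_cast
    rw [add_mul, mul_add, mul_add, one_mul, mul_one, smul_mul_assoc, hN, smul_zero]
    rw [add_smul, one_smul, one_mul]
    abel

/-- for odd primes `r ∣ p + 1`, `SL(2,𝔽_p)` contains an element
of order `r`, and every element of order `r` acts irreducibly on `𝔽_p²`. -/
theorem sl2_order_r_acts_irreducibly (p r : ℕ) [Fact p.Prime] (hr : r.Prime)
    (hpodd : Odd p) (hrodd : Odd r) (hdvd : r ∣ p + 1) :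
    (∃ g : Matrix.SpecialLinearGroup (Fin 2) (ZMod p), orderOf g = r) ∧
    (∀ g : Matrix.SpecialLinearGroup (Fin 2) (ZMod p), orderOf g = r →
      ∀ W : Submodule (ZMod p) (Fin 2 → ZMod p),
        (∀ v ∈ W, (g : Matrix (Fin 2) (Fin 2) (ZMod p)).mulVec v ∈ W) →
        W = ⊥ ∨ W = ⊤) := by
  constructor
  · haveI : Fact r.Prime := ⟨hr⟩
    have hdvd' : r ∣ Fintype.card (SpecialLinearGroup (Fin 2) (ZMod p)) := by
      rw [← Nat.card_eq_fintype_card, SL2_card' p]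
      exact dvd_mul_of_dvd_right hdvd _
    exact exists_prime_orderOf_dvd_card r hdvd'
  · intro g hg W hW
    by_contra hcon
    push_neg at hcon
    obtain ⟨hb, ht⟩ := hcon
    set A : Matrix (Fin 2) (Fin 2) (ZMod p) := (g : Matrix (Fin 2) (Fin 2) (ZMod p)) with hA
    -- nonzero vector in W
    obtain ⟨v, hvW, hv0⟩ := (Submodule.ne_bot_iff W).mp hb
    -- W = span {v}
    have hfr2 : Module.finrank (ZMod p) (Fin 2 → ZMod p) = 2 := by
      simp [Module.finrank_fintype_fun_eq_card]
    have hlt : Module.finrank (ZMod p) W < 2 := by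
      have := Submodule.finrank_lt (K := ZMod p) ht
      omega
    have hspan : Submodule.span (ZMod p) {v} = W := by
      apply Submodule.eq_of_le_of_finrank_le
        (Submodule.span_le.mpr (Set.singleton_subset_iff.mpr hvW))
      rw [finrank_span_singleton hv0]
      omega
    -- eigenvector
    obtain ⟨lam, hlam⟩ := Submodule.mem_span_singleton.mp
      (hspan ▸ hW v hvW)
    have hlam' : A.mulVec v = lam • v := hlam.symm
    -- powers
    have hpow : ∀ n : ℕ, (A ^ n).mulVec v = lam ^ n • v := by
      intro n
      induction n with
      | zero => simp
      | succ n ih =>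
        rw [pow_succ, ← Matrix.mulVec_mulVec, hlam', Matrix.mulVec_smul, ih,
          smul_smul, pow_succ, mul_comm]
    -- g^r = 1
    have hgr : A ^ r = 1 := by
      have := pow_orderOf_eq_one g
      rw [hg] at this
      have := congrArg (Subtype.val) this
      simpa [hA] using this
    have hlr : lam ^ r = 1 := by
      have h1 : lam ^ r • v = v := by rw [← hpow, hgr, Matrix.one_mulVec]
      have h2 : (lam ^ r - 1) • v = 0 := by rw [sub_smul, h1, one_smul, sub_self]
      rcases smul_eq_zero.mp h2 with h | h
      · exact sub_eq_zero.mp h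
      · exact absurd h hv0
    -- lam = 1
    have hlam0 : lam ≠ 0 := by
      intro h
      rw [h, zero_pow hr.ne_zero] at hlr
      exact one_ne_zero hlr.symm
    have hlam1 : lam = 1 := by
      have hordr : orderOf lam ∣ r := orderOf_dvd_of_pow_eq_one hlr
      have hordp : orderOf lam ∣ p - 1 :=
        orderOf_dvd_of_pow_eq_one (ZMod.pow_card_sub_one_eq_one hlam0)
      rcases (hr.eq_one_or_self_of_dvd _ hordr) with h | h
      · exact orderOf_eq_one_iff.mp h
      · exfalso
        rw [h] at hordp
        have h2 : r ∣ 2 := by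
          have hsub := Nat.dvd_sub hdvd hordp
          have hple : 2 ≤ p := (Fact.out : p.Prime).two_le
          have he : p + 1 - (p - 1) = 2 := by omega
          rwa [he] at hsub
        have := (Nat.prime_dvd_prime_iff_eq hr Nat.prime_two).mp h2
        rw [this] at hrodd
        exact (Nat.not_odd_iff_even.mpr even_two) hrodd
    have hv : A.mulVec v = v := by rw [hlam', hlam1, one_smul]
    -- trace and det relations
    have hdet2 : A 0 0 * A 1 1 - A 0 1 * A 1 0 = 1 := by
      rw [← Matrix.det_fin_two]; exact g.2
    have hdet0 : (A - 1).det = 0 := by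
      rw [← Matrix.exists_mulVec_eq_zero_iff]
      exact ⟨v, hv0, by rw [Matrix.sub_mulVec, hv, Matrix.one_mulVec, sub_self]⟩
    have htr : A 0 0 + A 1 1 = 2 := by
      rw [Matrix.det_fin_two] at hdet0
      simp only [Matrix.sub_apply, Matrix.one_apply_eq, Matrix.one_apply_ne,
        Matrix.one_apply] at hdet0
      simp only [Fin.isValue, if_true, if_false, Fin.zero_eq_one_iff, Fin.one_eq_zero_iff,
        OfNat.ofNat_ne_one, ite_false, sub_zero] at hdet0
      linear_combination hdet2 - hdet0
    set N : Matrix (Fin 2) (Fin 2) (ZMod p) := A - 1 with hNdef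
    have hN2 : N * N = 0 := by
      have hAeta : A = !![A 0 0, A 0 1; A 1 0, A 1 1] := Matrix.eta_fin_two A
      rw [hNdef, hAeta]
      ext i j
      fin_cases i <;> fin_cases j <;>
        simp [Matrix.mul_apply, Fin.sum_univ_two, Matrix.one_fin_two]
      · linear_combination A 0 0 * htr - hdet2
      · linear_combination A 0 1 * htr
      · linear_combination A 1 0 * htr
      · linear_combination A 1 1 * htr - hdet2
    have hAr : A ^ r = 1 + (r : ZMod p) • N := by
      have hA1 : A = 1 + N := by rw [hNdef]; abel
      rw [hA1]; exact unipotent_pow N hN2 r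
    have hrz : (r : ZMod p) ≠ 0 := by
      intro h
      rw [ZMod.natCast_eq_zero_iff] at h
      have hpr : p = r := (Nat.prime_dvd_prime_iff_eq (Fact.out : p.Prime) hr).mp h
      rw [← hpr] at hdvd
      have h1 : p ∣ 1 := by
        have := Nat.dvd_sub hdvd (dvd_refl p)
        simpa using this
      have := Nat.le_of_dvd one_pos h1
      have := (Fact.out : p.Prime).two_le
      omega
    have hsN : (r : ZMod p) • N = 0 := by
      rw [hAr] at hgr
      exact add_eq_left.mp hgr
    have hN0 : N = 0 := by
      rcases smul_eq_zero.mp hsN with h | h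
      · exact absurd h hrz
      · exact h
    have hA1 : A = 1 := by
      have := sub_eq_zero.mp (hNdef ▸ hN0)
      exact this
    have hg1 : g = 1 := Subtype.ext hA1
    rw [hg1, orderOf_one] at hg
    exact hr.one_lt.ne' hg.symm
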